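/- Let Γ be a group acting by isometries on a metric space X, let Γ' be a finite normal subgroup of Γ, and let x ∈ X. For R ≥ 0 set A(R) = {γ ∈ Γ : dist(x, γ·x) ≤ R} and Â(R) = {c ∈ Γ/Γ' : there exists γ ∈ Γ with γΓ' = c and dist(x, γ·x) ≤ R}, and assume each A(R) is finite. Then limsup_{R→∞} (log |A(R)|)/R = limsup_{R→∞} (log |Â(R)|)/R; that is, the exponential orbit growth rate of Γ at x equals that of the coset counting function of Γ/Γ'. -/

import Mathlib

open Metric Set Filter

lemma limsup_eq_limsup_sandwich (f g : ℝ → ℝ)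
    (hg0 : ∀ᶠ R in atTop, 0 ≤ g R)
    (hgf : ∀ᶠ R in atTop, g R ≤ f R)
    (hfg : ∀ ε : ℝ, 0 < ε → ∀ᶠ R in atTop, f R ≤ g R + ε) :
    limsup f atTop = limsup g atTop := by
  by_cases hbdd : IsBoundedUnder (· ≤ ·) atTop g
  · have hf0 : ∀ᶠ R in atTop, 0 ≤ f R := by
      filter_upwards [hg0, hgf] with R h1 h2; linarith
    have hgcob : IsCoboundedUnder (· ≤ ·) atTop g :=
      (isBoundedUnder_of_eventually_ge hg0).isCoboundedUnder_le
    have hfcob : IsCoboundedUnder (· ≤ ·) atTop f :=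
      (isBoundedUnder_of_eventually_ge hf0).isCoboundedUnder_le
    obtain ⟨m, hm⟩ := id hbdd
    have hm' : ∀ᶠ R in atTop, g R ≤ m := eventually_map.mp hm
    have hfbdd : IsBoundedUnder (· ≤ ·) atTop f := by
      refine ⟨m + 1, ?_⟩
      rw [eventually_map]
      filter_upwards [hfg 1 one_pos, hm'] with R h1 h2
      linarith
    apply le_antisymm
    · refine le_of_forall_pos_le_add fun ε hε => ?_
      have h1 : limsup f atTop ≤ limsup (fun R => g R + ε) atTop := by
        refine limsup_le_limsup (hfg ε hε) hfcob ?_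
        exact ⟨m + ε, by rw [eventually_map]; filter_upwards [hm'] with R h2; simpa using add_le_add_right h2 ε⟩
      rwa [limsup_add_const atTop g ε hbdd hgcob] at h1
    · exact limsup_le_limsup hgf hgcob hfbdd
  · have hfbdd : ¬ IsBoundedUnder (· ≤ ·) atTop f := by
      intro ⟨m2, hm2⟩
      exact hbdd ⟨m2, by
        rw [eventually_map] at hm2 ⊢
        filter_upwards [hm2, hgf] with R h1 h2; exact le_trans h2 h1⟩
    have hset : ∀ u : ℝ → ℝ, ¬ IsBoundedUnder (· ≤ ·) atTop u →
        { a : ℝ | ∀ᶠ n in atTop, u n ≤ a } = ∅ := by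
      intro u hu
      ext a
      simp only [mem_setOf_eq, mem_empty_iff_false, iff_false]
      intro h
      exact hu ⟨a, h⟩
    rw [limsup_eq, limsup_eq, hset f hfbdd, hset g hbdd]

/-- quotienting by a finite normal subgroup does not change the
exponential growth rate of orbit counts. -/
theorem stmt_5 {Γ X : Type*} [Group Γ] [MetricSpace X] [MulAction Γ X]
    (hiso : ∀ γ : Γ, Isometry (fun p : X => γ • p))
    (Γ' : Subgroup Γ) [Γ'.Normal] (hΓ' : (Γ' : Set Γ).Finite) (x : X)
    (hfin : ∀ R : ℝ, 0 ≤ R → {γ : Γ | dist x (γ • x) ≤ R}.Finite) :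
    limsup (fun R : ℝ => Real.log ({γ : Γ | dist x (γ • x) ≤ R}.ncard) / R) atTop =
      limsup (fun R : ℝ =>
        Real.log ({c : Γ ⧸ Γ' | ∃ γ : Γ, (γ : Γ ⧸ Γ') = c ∧ dist x (γ • x) ≤ R}.ncard) / R)
        atTop := by
  classical
  set K : ℕ := hΓ'.toFinset.card with hK
  have hK1 : 1 ≤ K := Finset.card_pos.mpr ⟨1, hΓ'.mem_toFinset.mpr Γ'.one_mem⟩
  -- key counting facts for R ≥ 0
  have key : ∀ R : ℝ, 0 ≤ R →
      let nA := ({γ : Γ | dist x (γ • x) ≤ R}.ncard)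
      let nB := ({c : Γ ⧸ Γ' | ∃ γ : Γ, (γ : Γ ⧸ Γ') = c ∧ dist x (γ • x) ≤ R}.ncard)
      1 ≤ nB ∧ nB ≤ nA ∧ nA ≤ K * nB := by
    intro R hR
    have hA : ({γ : Γ | dist x (γ • x) ≤ R}).Finite := hfin R hR
    have himg : {c : Γ ⧸ Γ' | ∃ γ : Γ, (γ : Γ ⧸ Γ') = c ∧ dist x (γ • x) ≤ R}
        = (fun γ : Γ => (γ : Γ ⧸ Γ')) '' {γ : Γ | dist x (γ • x) ≤ R} := by
      ext c
      simp only [Set.mem_setOf_eq, Set.mem_image]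
      exact ⟨fun ⟨γ, h1, h2⟩ => ⟨γ, h2, h1⟩, fun ⟨γ, h1, h2⟩ => ⟨γ, h2, h1⟩⟩
    set s : Finset Γ := hA.toFinset with hs
    have hsA : ↑s = {γ : Γ | dist x (γ • x) ≤ R} := hA.coe_toFinset
    have hnA : ({γ : Γ | dist x (γ • x) ≤ R}.ncard) = s.card :=
      Set.ncard_eq_toFinset_card _ hA
    have hBimg : {c : Γ ⧸ Γ' | ∃ γ : Γ, (γ : Γ ⧸ Γ') = c ∧ dist x (γ • x) ≤ R}
        = ↑(s.image (fun γ : Γ => (γ : Γ ⧸ Γ'))) := by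
      rw [himg, Finset.coe_image, hsA]
    have hnB : ({c : Γ ⧸ Γ' | ∃ γ : Γ, (γ : Γ ⧸ Γ') = c ∧ dist x (γ • x) ≤ R}.ncard)
        = (s.image (fun γ : Γ => (γ : Γ ⧸ Γ'))).card := by
      rw [hBimg, Set.ncard_coe_finset]
    refine ⟨?_, ?_, ?_⟩
    · rw [hnB]
      refine Finset.card_pos.mpr ⟨((1 : Γ) : Γ ⧸ Γ'), Finset.mem_image.mpr ⟨1, ?_, rfl⟩⟩
      rw [hs, Set.Finite.mem_toFinset]
      simp [hR]
    · rw [hnB, hnA]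
      exact Finset.card_image_le
    · rw [hnB, hnA]
      refine Finset.card_le_mul_card_image s K ?_
      intro b hb
      obtain ⟨γ0, hγ0s, hγ0⟩ := Finset.mem_image.mp hb
      refine le_trans (Finset.card_le_card_of_injOn (fun γ => γ⁻¹ * γ0)
        (fun γ hγ => ?_) (fun γ1 h1 γ2 h2 h => ?_)) le_rfl
      · obtain ⟨-, hmk⟩ := Finset.mem_filter.mp hγ
        rw [Finset.mem_coe, Set.Finite.mem_toFinset]
        have heq : (γ : Γ ⧸ Γ') = (γ0 : Γ ⧸ Γ') := by rw [hmk, hγ0]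
        have h' : γ⁻¹ * γ0 ∈ Γ' := QuotientGroup.eq.mp heq
        exact h'
      · have := mul_right_cancel h
        exact inv_injective this
  -- main reduction
  apply limsup_eq_limsup_sandwich
  · filter_upwards [eventually_ge_atTop (1 : ℝ)] with R hR
    obtain ⟨h1, -, -⟩ := key R (by linarith)
    refine div_nonneg (Real.log_nonneg ?_) (by linarith)
    exact_mod_cast h1
  · filter_upwards [eventually_ge_atTop (1 : ℝ)] with R hR
    obtain ⟨h1, h2, -⟩ := key R (by linarith)
    have hlog : Real.log ({c : Γ ⧸ Γ' | ∃ γ : Γ, (γ : Γ ⧸ Γ') = c ∧ dist x (γ • x) ≤ R}.ncard)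
        ≤ Real.log ({γ : Γ | dist x (γ • x) ≤ R}.ncard) := by
      apply Real.log_le_log (by exact_mod_cast h1)
      exact_mod_cast h2
    exact div_le_div_of_nonneg_right hlog (by linarith)
  · intro ε hε
    have htend : Tendsto (fun R : ℝ => Real.log K / R) atTop (nhds 0) :=
      tendsto_const_nhds.div_atTop tendsto_id
    filter_upwards [eventually_ge_atTop (1 : ℝ), htend.eventually (gt_mem_nhds hε)]
      with R hR hεR
    obtain ⟨h1, h2, h3⟩ := key R (by linarith)
    have hB1 : (1 : ℝ) ≤ ({c : Γ ⧸ Γ' | ∃ γ : Γ, (γ : Γ ⧸ Γ') = c ∧ dist x (γ • x) ≤ R}.ncard : ℝ) := by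
      exact_mod_cast h1
    have hA1 : (1 : ℝ) ≤ ({γ : Γ | dist x (γ • x) ≤ R}.ncard : ℝ) := by
      exact_mod_cast h1.trans h2
    have hcast : (({γ : Γ | dist x (γ • x) ≤ R}.ncard : ℕ) : ℝ)
        ≤ (K : ℝ) * (({c : Γ ⧸ Γ' | ∃ γ : Γ, (γ : Γ ⧸ Γ') = c ∧ dist x (γ • x) ≤ R}.ncard : ℕ) : ℝ) := by
      exact_mod_cast h3
    have hlog : Real.log ({γ : Γ | dist x (γ • x) ≤ R}.ncard)
        ≤ Real.log K + Real.log ({c : Γ ⧸ Γ' | ∃ γ : Γ, (γ : Γ ⧸ Γ') = c ∧ dist x (γ • x) ≤ R}.ncard) := by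
      calc Real.log ({γ : Γ | dist x (γ • x) ≤ R}.ncard)
          ≤ Real.log ((K : ℝ) * ({c : Γ ⧸ Γ' | ∃ γ : Γ, (γ : Γ ⧸ Γ') = c ∧ dist x (γ • x) ≤ R}.ncard : ℕ)) :=
            Real.log_le_log (by linarith) hcast
        _ = _ := Real.log_mul (by positivity) (by linarith)
    have hdiv : Real.log ({γ : Γ | dist x (γ • x) ≤ R}.ncard) / R
        ≤ (Real.log K + Real.log ({c : Γ ⧸ Γ' | ∃ γ : Γ, (γ : Γ ⧸ Γ') = c ∧ dist x (γ • x) ≤ R}.ncard)) / R :=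
      div_le_div_of_nonneg_right hlog (by linarith)
    rw [add_div] at hdiv
    linarith
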